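/- arXiv:2404.09749 — 4 statements merged into one kernel-verified Lean document; each statement's English description precedes it below -/
import Mathlib

section
/- Let S ⊆ ℝ^n be a semi-algebraic set defined by symmetric polynomial inequalities f_1 ≥ 0, ..., f_s ≥ 0 where each f_i has degree at most d ≤ n. If x ∈ S and a = (p_1(x), ..., p_d(x)), then the Vandermonde variety V(a) = {z ∈ ℝ^n : p_i(z) = a_i for i = 1,...,d} is entirely contained in S. -/
open MvPolynomial

section Aux
open Finset AddMonoidAlgebra

private lemma myEsymmHom (n k : ℕ) : (esymm (Fin n) ℝ k).IsHomogeneous k := by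
  rw [esymm]
  apply IsHomogeneous.sum
  intro t ht
  have h := (Finset.mem_powersetCard.mp ht).2
  have := IsHomogeneous.prod t (fun i => (X i : MvPolynomial (Fin n) ℝ)) (fun _ => 1)
    (fun i _ => isHomogeneous_X ℝ i)
  simpa [h] using this

private lemma myPsumEval (n : ℕ) (y : Fin n → ℝ) (j : ℕ) :
    eval y (psum (Fin n) ℝ j) = ∑ i, y i ^ j := by
  simp [psum]

private lemma myEsymmEvalEq (n d : ℕ) (x z : Fin n → ℝ)
    (hz : ∀ i : Fin d, ∑ j, z j ^ ((i : ℕ) + 1) = ∑ j, x j ^ ((i : ℕ) + 1)) :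
    ∀ k, k ≤ d → eval z (esymm (Fin n) ℝ k) = eval x (esymm (Fin n) ℝ k) := by
  have hps : ∀ j, 1 ≤ j → j ≤ d →
      eval z (psum (Fin n) ℝ j) = eval x (psum (Fin n) ℝ j) := by
    intro j h1 h2
    have h := hz ⟨j - 1, by omega⟩
    rw [myPsumEval, myPsumEval]
    simpa [Nat.sub_add_cancel h1] using h
  intro k
  induction k using Nat.strong_induction_on with
  | _ k ih =>
    intro hk
    rcases Nat.eq_zero_or_pos k with rfl | hk0
    · simp
    · have key : ∀ y : Fin n → ℝ, (k : ℝ) * eval y (esymm (Fin n) ℝ k) =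
          (-1 : ℝ) ^ (k + 1) * ∑ a ∈ (antidiagonal k).filter (fun a => a.1 < k),
            (-1 : ℝ) ^ a.1 * eval y (esymm (Fin n) ℝ a.1) * eval y (psum (Fin n) ℝ a.2) := by
        intro y
        have h := congrArg (eval y) (mul_esymm_eq_sum (Fin n) ℝ k)
        simpa using h
      have hcanc : (k : ℝ) * eval z (esymm (Fin n) ℝ k) =
          (k : ℝ) * eval x (esymm (Fin n) ℝ k) := by
        rw [key z, key x]
        congr 1
        apply Finset.sum_congr rfl
        intro a ha
        simp only [Finset.mem_filter, Finset.HasAntidiagonal.mem_antidiagonal] at ha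
        rw [ih a.1 ha.2 (le_trans (Nat.le_of_lt ha.2) hk),
          hps a.2 (by omega) (by omega)]
      exact mul_left_cancel₀ (by exact_mod_cast hk0.ne' : (k : ℝ) ≠ 0) hcanc

private lemma mySupportBound (n d : ℕ) (g : MvPolynomial (Fin n) ℝ)
    (hdeg : (aeval (fun j : Fin n => esymm (Fin n) ℝ ((j : ℕ) + 1)) g).totalDegree ≤ d) :
    ∀ t ∈ g.support, (∑ j ∈ t.support, ((j : ℕ) + 1) * t j) ≤ d := by
  classical
  set e : Fin n → MvPolynomial (Fin n) ℝ := fun j => esymm (Fin n) ℝ ((j : ℕ) + 1) with he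
  set w : (Fin n →₀ ℕ) → ℕ := fun t => ∑ j ∈ t.support, ((j : ℕ) + 1) * t j with hw
  set q : (Fin n →₀ ℕ) → MvPolynomial (Fin n) ℝ :=
    fun t => esymmAlgHomMonomial (Fin n) t (coeff t g) with hqdef
  have hq_eq : ∀ t, q t = aeval e (monomial t (coeff t g)) := by
    intro t
    rw [hqdef]
    exact esymmAlgHom_apply _
  have hq_hom : ∀ t, (q t).IsHomogeneous (w t) := by
    intro t
    rw [hq_eq, aeval_monomial, algebraMap_eq]
    have hp := IsHomogeneous.prod t.support (fun j => e j ^ t j)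
      (fun j => ((j : ℕ) + 1) * t j)
      (fun j _ => (myEsymmHom n ((j : ℕ) + 1)).pow (t j))
    exact (hp.C_mul _)
  intro t0 ht0
  by_contra hcon
  push_neg at hcon
  set W := g.support.sup w with hW
  have hdW : d < W := lt_of_lt_of_le hcon (Finset.le_sup (f := w) ht0)
  have hsum : aeval e g = ∑ t ∈ g.support, q t := by
    conv_lhs => rw [g.as_sum]
    rw [map_sum]
    exact Finset.sum_congr rfl fun t ht => (hq_eq t).symm
  have h0 : homogeneousComponent W (aeval e g) = 0 :=
    homogeneousComponent_eq_zero W _ (lt_of_le_of_lt hdeg hdW)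
  have h1 : homogeneousComponent W (aeval e g)
      = ∑ t ∈ g.support.filter (fun t => w t = W), q t := by
    rw [hsum, map_sum, Finset.sum_filter]
    refine Finset.sum_congr rfl fun t ht => ?_
    have hmem : q t ∈ homogeneousSubmodule (Fin n) ℝ (w t) :=
      (mem_homogeneousSubmodule _ _).mpr (hq_hom t)
    rw [homogeneousComponent_of_mem hmem]
    by_cases h : w t = W
    · rw [if_pos h.symm, if_pos h]
    · rw [if_neg (fun hh => h hh.symm), if_neg h]
  have hS : (g.support.filter (fun t => w t = W)).Nonempty := by
    obtain ⟨t, ht, hts⟩ := Finset.exists_mem_eq_sup g.support ⟨t0, ht0⟩ w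
    exact ⟨t, Finset.mem_filter.mpr ⟨ht, hts.symm⟩⟩
  have hne : (∑ t ∈ g.support.filter (fun t => w t = W), q t) ≠ 0 := by
    apply sum_ne_zero_of_injOn_supDegree (D := toLex)
    · exact hS
    · intro t ht
      rw [hqdef, Ne, ← leadingCoeff_eq_zero toLex.injective,
        leadingCoeff_esymmAlgHomMonomial t le_rfl]
      exact mem_support_iff.mp (Finset.mem_filter.mp ht).1
    · intro t ht u hu hts
      simp only [Function.comp] at hts
      have e1 := supDegree_esymmAlgHomMonomial
        (mem_support_iff.mp (Finset.mem_filter.mp ht).1) t (le_refl n)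
      have e2 := supDegree_esymmAlgHomMonomial
        (mem_support_iff.mp (Finset.mem_filter.mp hu).1) u (le_refl n)
      rw [hqdef] at hts
      rw [hts] at e1
      have e3 := e1.symm.trans e2
      have e4 : (Fin.accumulate n n) ⇑t = (Fin.accumulate n n) ⇑u := e3
      have := Fin.accumulate_injective (le_refl n) e4
      exact DFunLike.ext' this
  exact hne (h1 ▸ h0)

private lemma myEvalAeval {n : ℕ} (y : Fin n → ℝ) (e : Fin n → MvPolynomial (Fin n) ℝ)
    (g : MvPolynomial (Fin n) ℝ) :
    eval y (aeval e g) = eval (fun j => eval y (e j)) g := by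
  have h := aeval_bind₁ (S := ℝ) y e g
  have h1 : ∀ (p : MvPolynomial (Fin n) ℝ) (v : Fin n → ℝ), aeval v p = eval v p := fun p v => by
    rw [aeval_def, Algebra.algebraMap_self]
    rfl
  rw [h1] at h
  rw [show (aeval e : MvPolynomial (Fin n) ℝ →ₐ[ℝ] MvPolynomial (Fin n) ℝ) g = bind₁ e g from rfl, h]
  simp only [h1]

end Aux

theorem stmt2 (n d s : ℕ) (hd : d ≤ n) (f : Fin s → MvPolynomial (Fin n) ℝ)
    (hsym : ∀ i, (f i).IsSymmetric) (hdeg : ∀ i, (f i).totalDegree ≤ d)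
    (x : Fin n → ℝ) (hx : ∀ i, 0 ≤ eval x (f i)) (z : Fin n → ℝ)
    (hz : ∀ i : Fin d, ∑ j, z j ^ ((i : ℕ) + 1) = ∑ j, x j ^ ((i : ℕ) + 1)) :
    ∀ i, 0 ≤ eval z (f i) := by
  intro i
  have key : eval z (f i) = eval x (f i) := by
    obtain ⟨g, hg⟩ := (esymmAlgHom_fin_bijective ℝ n).2 ⟨f i, hsym i⟩
    have hfg : aeval (fun j : Fin n => esymm (Fin n) ℝ ((j : ℕ) + 1)) g = f i := by
      rw [← esymmAlgHom_apply, hg]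
    have hsupp := mySupportBound n d g (by rw [hfg]; exact hdeg i)
    rw [← hfg, myEvalAeval, myEvalAeval, eval_eq', eval_eq']
    apply Finset.sum_congr rfl
    intro t ht
    congr 1
    apply Finset.prod_congr rfl
    intro j _
    by_cases hj : t j = 0
    · simp [hj]
    · have h1 := hsupp t ht
      have h2 : ((j : ℕ) + 1) * t j ≤ ∑ k ∈ t.support, ((k : ℕ) + 1) * t k :=
        Finset.single_le_sum (f := fun k : Fin n => ((k : ℕ) + 1) * t k) (fun k _ => Nat.zero_le _) (Finsupp.mem_support_iff.mpr hj)
      have h3 : (j : ℕ) + 1 ≤ ((j : ℕ) + 1) * t j :=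
        Nat.le_mul_of_pos_right _ (Nat.pos_of_ne_zero hj)
      rw [myEsymmEvalEq n d x z hz ((j : ℕ) + 1) (le_trans (le_trans h3 h2) h1)]
  rw [key]
  exact hx i
end

section
/- Let S ⊆ ℝ^n be defined by symmetric polynomials of degree at most d ≤ n, let x ∈ S, let a = (p_1(x), ..., p_d(x)), and suppose x' ∈ ℝ^n lies in the Vandermonde variety V(a) and V(a) ∩ W_c is connected (nonempty). If moreover x, x' both lie in the canonical Weyl chamber W_c, then x and x' lie in the same connected component of S ∩ W_c. -/
open MvPolynomial

section Aux

open Finset AddMonoidAlgebra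

/-- total degree of an elementary symmetric polynomial is at most `k`. -/
lemma aux_esymm_totalDegree_le (n k : ℕ) :
    (esymm (Fin n) ℝ k).totalDegree ≤ k := by
  rw [esymm]
  refine (totalDegree_finset_sum _ _).trans ?_
  refine Finset.sup_le fun t ht => ?_
  refine (totalDegree_finset_prod _ _).trans ?_
  have : ∀ i ∈ t, (X i : MvPolynomial (Fin n) ℝ).totalDegree = 1 := fun i _ => totalDegree_X i
  rw [Finset.sum_congr rfl this, Finset.sum_const, smul_eq_mul, mul_one]
  exact le_of_eq (Finset.mem_powersetCard.mp ht).2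

lemma aux_sum_accumulate (n : ℕ) (t : Fin n → ℕ) :
    ∑ j : Fin n, Fin.accumulate n n t j = ∑ i : Fin n, ((i : ℕ) + 1) * t i := by
  simp_rw [Fin.accumulate_apply]
  calc ∑ j : Fin n, ∑ i ∈ Finset.univ.filter (fun i : Fin n => (j : ℕ) ≤ (i : ℕ)), t i
      = ∑ j : Fin n, ∑ i : Fin n, if (j : ℕ) ≤ (i : ℕ) then t i else 0 := by
        simp [Finset.sum_filter]
    _ = ∑ i : Fin n, ∑ j : Fin n, if (j : ℕ) ≤ (i : ℕ) then t i else 0 := Finset.sum_comm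
    _ = ∑ i : Fin n, ((i : ℕ) + 1) * t i := by
        refine Finset.sum_congr rfl fun i _ => ?_
        rw [← Finset.sum_filter]
        have : Finset.filter (fun j : Fin n => (j : ℕ) ≤ (i : ℕ)) Finset.univ = Finset.Iic i := by
          ext j
          simp only [Finset.mem_filter, Finset.mem_univ, true_and, Finset.mem_Iic, Fin.le_def]
        rw [this, Finset.sum_const, Fin.card_Iic, smul_eq_mul]

/-- A symmetric polynomial of total degree at most `d` lies in the subalgebra generated by
the elementary symmetric polynomials `e_1, ..., e_d`. -/
lemma aux_symm_mem_adjoin (n d : ℕ) :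
    ∀ u : Lex (Fin n →₀ ℕ), ∀ p : MvPolynomial (Fin n) ℝ, p.IsSymmetric →
      p.totalDegree ≤ d → p.supDegree toLex = u →
      p ∈ Algebra.adjoin ℝ ((fun k => esymm (Fin n) ℝ k) '' Set.Icc 1 d) := by
  intro u
  induction u using WellFoundedLT.induction with
  | _ u ih =>
  intro p hp hdeg he
  obtain rfl | h0 := eq_or_ne p 0
  · exact Subalgebra.zero_mem _
  -- the leading exponent
  have hlc : p.leadingCoeff toLex ≠ 0 := by
    rwa [Ne, leadingCoeff_eq_zero toLex.injective]
  have hsupp : ofLex (p.supDegree toLex) ∈ p.support := by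
    rw [mem_support_iff, ← leadingCoeff_toLex]
    exact hlc
  have hssum : ∑ j, (ofLex (p.supDegree toLex)) j ≤ d := by
    have h1 := le_totalDegree hsupp
    have h2 : (ofLex (p.supDegree toLex)).sum (fun _ e => e)
        = ∑ j, (ofLex (p.supDegree toLex)) j := Finsupp.sum_fintype _ _ (fun _ => rfl)
    rw [← h2]
    exact h1.trans hdeg
  set t : Fin n →₀ ℕ :=
    Finsupp.equivFunOnFinite.symm (Fin.invAccumulate n n ↑(ofLex (p.supDegree toLex))) with ht
  have hacc : Fin.accumulate n n ↑t = ↑(ofLex (p.supDegree toLex)) := by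
    have := Fin.accumulate_invAccumulate le_rfl hp.antitone_supDegree
    simpa [ht] using this
  have hweight : ∑ i : Fin n, ((i : ℕ) + 1) * t i ≤ d := by
    rw [← aux_sum_accumulate n ↑t]
    calc ∑ j : Fin n, Fin.accumulate n n (↑t) j
        = ∑ j, (ofLex (p.supDegree toLex)) j := by rw [hacc]
      _ ≤ d := hssum
  have hvar : ∀ i : Fin n, t i ≠ 0 → (i : ℕ) + 1 ≤ d := by
    intro i hi
    have : (i : ℕ) + 1 ≤ ((i : ℕ) + 1) * t i := by
      have : 1 ≤ t i := Nat.one_le_iff_ne_zero.mpr hi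
      nlinarith
    calc (i : ℕ) + 1 ≤ ((i : ℕ) + 1) * t i := this
      _ ≤ ∑ i : Fin n, ((i : ℕ) + 1) * t i :=
          Finset.single_le_sum (f := fun i : Fin n => ((i : ℕ) + 1) * t i)
            (fun _ _ => Nat.zero_le _) (Finset.mem_univ i)
      _ ≤ d := hweight
  -- the leading "esymm monomial"
  set m : MvPolynomial (Fin n) ℝ := esymmAlgHomMonomial (Fin n) t (p.leadingCoeff toLex) with hm
  have hmformula : m = C (p.leadingCoeff toLex) * ∏ i ∈ t.support, esymm (Fin n) ℝ ((i : ℕ) + 1) ^ t i := by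
    rw [hm, esymmAlgHomMonomial, esymmAlgHom_apply, aeval_monomial, algebraMap_eq]
    rfl
  have hmmem : m ∈ Algebra.adjoin ℝ ((fun k => esymm (Fin n) ℝ k) '' Set.Icc 1 d) := by
    rw [hmformula]
    refine Subalgebra.mul_mem _ ?_ ?_
    · exact Subalgebra.algebraMap_mem _ _
    · refine Subalgebra.prod_mem _ fun i hi => ?_
      refine Subalgebra.pow_mem _ ?_ _
      refine Algebra.subset_adjoin ?_
      exact ⟨(i : ℕ) + 1, ⟨Nat.succ_le_succ (Nat.zero_le _), hvar i (Finsupp.mem_support_iff.mp hi)⟩, rfl⟩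
  have hmdeg : m.totalDegree ≤ d := by
    rw [hmformula]
    refine (totalDegree_mul _ _).trans ?_
    rw [totalDegree_C, zero_add]
    refine le_trans ((totalDegree_finset_prod _ _).trans ?_) hweight
    calc ∑ i ∈ t.support, (esymm (Fin n) ℝ ((i : ℕ) + 1) ^ t i).totalDegree
        ≤ ∑ i ∈ t.support, ((i : ℕ) + 1) * t i := by
          refine Finset.sum_le_sum fun i _ => ?_
          refine (totalDegree_pow _ _).trans ?_
          exact le_trans (Nat.mul_le_mul le_rfl (aux_esymm_totalDegree_le n _))
            (le_of_eq (mul_comm _ _))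
      _ ≤ ∑ i : Fin n, ((i : ℕ) + 1) * t i :=
          Finset.sum_le_sum_of_subset (Finset.subset_univ _)
  have hd' : m.supDegree toLex = p.supDegree toLex := by
    rw [← ofLex_inj, DFunLike.ext'_iff, hm, supDegree_esymmAlgHomMonomial hlc t le_rfl]
    exact hacc
  obtain hep | hne := eq_or_ne p m
  · rw [hep]; exact hmmem
  have hlceq : p.leadingCoeff toLex = m.leadingCoeff toLex := by
    rw [hm, leadingCoeff_esymmAlgHomMonomial t le_rfl]
  have hlt : (p - m).supDegree toLex < p.supDegree toLex := by
    refine (supDegree_sub_lt_of_leadingCoeff_eq toLex.injective hd'.symm hlceq).resolve_right hne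
  have hsub0 : p - m ≠ 0 ∨ p - m = 0 := (ne_or_eq _ _)
  rcases hsub0 with hne0 | heq0
  · have hpm : p = (p - m) + m := by ring
    rw [hpm]
    refine Subalgebra.add_mem _ ?_ hmmem
    refine ih _ (he ▸ hlt) (p - m) (hp.sub (isSymmetric_esymmAlgHomMonomial _ _)) ?_ rfl
    exact (totalDegree_sub _ _).trans (max_le hdeg hmdeg)
  · have : p = m := by rwa [sub_eq_zero] at heq0
    rw [this]; exact hmmem

/-- evaluation of elementary symmetric polynomials is determined by the power sums
`p_1, ..., p_d`. -/
lemma aux_esymm_eval_eq (n d : ℕ) (z x : Fin n → ℝ)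
    (h : ∀ k, 1 ≤ k → k ≤ d → ∑ j, z j ^ k = ∑ j, x j ^ k) :
    ∀ k, k ≤ d → eval z (esymm (Fin n) ℝ k) = eval x (esymm (Fin n) ℝ k) := by
  intro k
  induction k using Nat.strong_induction_on with
  | _ k ih =>
  intro hkd
  rcases Nat.eq_zero_or_pos k with rfl | hk
  · simp [esymm_zero]
  have hps : ∀ (w : Fin n → ℝ) (j : ℕ), eval w (psum (Fin n) ℝ j) = ∑ i, w i ^ j := by
    intro w j; simp [psum]
  have key := psum_eq_mul_esymm_sub_sum (Fin n) ℝ k hk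
  have hz := congrArg (eval z) key
  have hx2 := congrArg (eval x) key
  simp only [map_sub, map_mul, map_sum, map_pow, map_neg, map_one, map_natCast] at hz hx2
  have hsum_eq : ∑ a ∈ Finset.HasAntidiagonal.antidiagonal k with a.1 ∈ Set.Ioo 0 k,
        (-1 : ℝ) ^ a.1 * eval z (esymm (Fin n) ℝ a.1) * eval z (psum (Fin n) ℝ a.2)
      = ∑ a ∈ Finset.HasAntidiagonal.antidiagonal k with a.1 ∈ Set.Ioo 0 k,
        (-1 : ℝ) ^ a.1 * eval x (esymm (Fin n) ℝ a.1) * eval x (psum (Fin n) ℝ a.2) := by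
    refine Finset.sum_congr rfl fun a haa => ?_
    rw [Finset.mem_filter] at haa
    obtain ⟨hmem, hio⟩ := haa
    rw [Finset.HasAntidiagonal.mem_antidiagonal] at hmem
    obtain ⟨h1, h2⟩ := hio
    have ha1 : a.1 < k := h2
    have ha1d : a.1 ≤ d := le_trans (le_of_lt ha1) hkd
    have ha2pos : 1 ≤ a.2 := by omega
    have ha2d : a.2 ≤ d := by omega
    rw [ih a.1 ha1 ha1d, hps z a.2, hps x a.2, h a.2 ha2pos ha2d]
  have hpse : eval z (psum (Fin n) ℝ k) = eval x (psum (Fin n) ℝ k) := by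
    rw [hps, hps]; exact h k hk hkd
  have hfac : ((-1 : ℝ) ^ (k + 1) * (k : ℝ)) ≠ 0 := by
    apply mul_ne_zero
    · exact pow_ne_zero _ (by norm_num)
    · exact Nat.cast_ne_zero.mpr (Nat.one_le_iff_ne_zero.mp hk)
  apply mul_left_cancel₀ hfac
  have e1 : (-1 : ℝ) ^ (k + 1) * (k : ℝ) * eval z (esymm (Fin n) ℝ k)
      = eval z (psum (Fin n) ℝ k) + ∑ a ∈ Finset.HasAntidiagonal.antidiagonal k with a.1 ∈ Set.Ioo 0 k,
        (-1 : ℝ) ^ a.1 * eval z (esymm (Fin n) ℝ a.1) * eval z (psum (Fin n) ℝ a.2) := by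
    rw [hz]; ring
  have e2 : (-1 : ℝ) ^ (k + 1) * (k : ℝ) * eval x (esymm (Fin n) ℝ k)
      = eval x (psum (Fin n) ℝ k) + ∑ a ∈ Finset.HasAntidiagonal.antidiagonal k with a.1 ∈ Set.Ioo 0 k,
        (-1 : ℝ) ^ a.1 * eval x (esymm (Fin n) ℝ a.1) * eval x (psum (Fin n) ℝ a.2) := by
    rw [hx2]; ring
  rw [e1, e2, hpse, hsum_eq]

end Aux

theorem stmt3 (n d s : ℕ) (hd : d ≤ n) (f : Fin s → MvPolynomial (Fin n) ℝ)
    (hsym : ∀ i, (f i).IsSymmetric) (hdeg : ∀ i, (f i).totalDegree ≤ d)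
    (S : Set (Fin n → ℝ)) (hS : S = {x | ∀ i, 0 ≤ eval x (f i)})
    (Wc : Set (Fin n → ℝ)) (hW : Wc = {x | Monotone x})
    (a : Fin d → ℝ) (x x' : Fin n → ℝ)
    (hx : x ∈ S) (ha : ∀ i : Fin d, ∑ j, x j ^ ((i : ℕ) + 1) = a i)
    (hx' : ∀ i : Fin d, ∑ j, x' j ^ ((i : ℕ) + 1) = a i)
    (hconn : IsConnected ({z | ∀ i : Fin d, ∑ j, z j ^ ((i : ℕ) + 1) = a i} ∩ Wc))
    (hxW : x ∈ Wc) (hx'W : x' ∈ Wc) :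
    x' ∈ connectedComponentIn (S ∩ Wc) x := by
  -- step 1: every point of V(a) gives the same value to each f i as x does
  have heval : ∀ z : Fin n → ℝ, (∀ i : Fin d, ∑ j, z j ^ ((i : ℕ) + 1) = a i) →
      ∀ i, eval z (f i) = eval x (f i) := by
    intro z hz i
    have hpows : ∀ k, 1 ≤ k → k ≤ d → ∑ j, z j ^ k = ∑ j, x j ^ k := by
      intro k h1 h2
      have hk : k - 1 < d := by omega
      have hz' := hz ⟨k - 1, hk⟩
      have hx'' := ha ⟨k - 1, hk⟩
      simp only at hz' hx''
      have : (k - 1) + 1 = k := by omega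
      rw [this] at hz' hx''
      rw [hz', hx'']
    have hE : ∀ k, k ≤ d → eval z (esymm (Fin n) ℝ k) = eval x (esymm (Fin n) ℝ k) :=
      aux_esymm_eval_eq n d z x hpows
    have hmem : f i ∈ Algebra.adjoin ℝ ((fun k => esymm (Fin n) ℝ k) '' Set.Icc 1 d) :=
      aux_symm_mem_adjoin n d _ (f i) (hsym i) (hdeg i) rfl
    have haev : ∀ (w : Fin n → ℝ) (p : MvPolynomial (Fin n) ℝ),
        (aeval w : MvPolynomial (Fin n) ℝ →ₐ[ℝ] ℝ) p = eval w p := by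
      intro w p
      exact RingHom.congr_fun (MvPolynomial.coe_aeval_eq_eval w) p
    have heqon : Set.EqOn (aeval z : MvPolynomial (Fin n) ℝ →ₐ[ℝ] ℝ) (aeval x)
        (Algebra.adjoin ℝ ((fun k => esymm (Fin n) ℝ k) '' Set.Icc 1 d)) := by
      rw [AlgHom.eqOn_adjoin_iff]
      rintro y ⟨k, ⟨hk1, hk2⟩, rfl⟩
      rw [haev, haev]
      exact hE k hk2
    have := heqon hmem
    rwa [haev, haev] at this
  -- step 2: V(a) ∩ Wc ⊆ S ∩ Wc
  have hsub : ({z | ∀ i : Fin d, ∑ j, z j ^ ((i : ℕ) + 1) = a i} ∩ Wc) ⊆ S ∩ Wc := by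
    rintro z ⟨hz1, hz2⟩
    refine ⟨?_, hz2⟩
    rw [hS]
    intro i
    rw [heval z hz1 i]
    rw [hS] at hx
    exact hx i
  -- step 3: x, x' ∈ V(a) ∩ Wc, connected
  have hxT : x ∈ ({z | ∀ i : Fin d, ∑ j, z j ^ ((i : ℕ) + 1) = a i} ∩ Wc) := ⟨ha, hxW⟩
  have hx'T : x' ∈ ({z | ∀ i : Fin d, ∑ j, z j ^ ((i : ℕ) + 1) = a i} ∩ Wc) := ⟨hx', hx'W⟩
  exact hconn.isPreconnected.subset_connectedComponentIn hxT hsub hx'T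
end

section
/- Any minimizer (or maximizer) of p_{d+1} on the Vandermonde variety V(a) = {x ∈ ℝ^n : p_1(x) = a_1, ..., p_d(x) = a_d}, assuming V(a) is compact and nonempty, has at most d distinct coordinates. -/
theorem stmt15 (n d : ℕ) (a : Fin d → ℝ) (V : Set (Fin n → ℝ))
    (hV : V = {x | ∀ i : Fin d, ∑ j, x j ^ ((i : ℕ) + 1) = a i})
    (hcomp : IsCompact V) (hne : V.Nonempty) (x : Fin n → ℝ) (hx : x ∈ V)
    (hext : IsMinOn (fun y => ∑ j, y j ^ (d + 1)) V x ∨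
            IsMaxOn (fun y => ∑ j, y j ^ (d + 1)) V x) :
    (Finset.univ.image x).card ≤ d := by
  classical
  -- The candidate gradients
  set D : ℕ → ((Fin n → ℝ) →L[ℝ] ℝ) := fun m =>
    ∑ j : Fin n, (((m : ℝ) + 1) * x j ^ m) • (ContinuousLinearMap.proj j) with hDdef
  have hDeriv : ∀ m : ℕ,
      HasStrictFDerivAt (fun y : Fin n → ℝ => ∑ j, y j ^ (m + 1)) (D m) x := by
    intro m
    apply HasStrictFDerivAt.fun_sum
    intro j _
    have h1 : HasStrictDerivAt (fun t : ℝ => t ^ (m + 1)) (((m : ℝ) + 1) * x j ^ m) (x j) := by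
      have := hasStrictDerivAt_pow (m + 1) (x j)
      simpa using this
    have h2 := (ContinuousLinearMap.proj j : (Fin n → ℝ) →L[ℝ] ℝ).hasStrictFDerivAt (x := x)
    have h3 := h1.comp_hasStrictFDerivAt x h2
    exact h3
  have hDapp : ∀ (m : ℕ) (j : Fin n), D m (Pi.single j 1) = ((m : ℝ) + 1) * x j ^ m := by
    intro m j
    simp only [hDdef, ContinuousLinearMap.coe_sum', Finset.sum_apply,
      ContinuousLinearMap.smul_apply, ContinuousLinearMap.proj_apply, smul_eq_mul,
      Pi.single_apply, mul_ite, mul_one, mul_zero]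
    rw [Finset.sum_ite_eq' Finset.univ j fun j' => ((m : ℝ) + 1) * x j' ^ m]
    simp
  -- rewrite V as the Lagrange-style constraint set
  have hVx : V = {y : Fin n → ℝ | ∀ i : Fin d, (fun z : Fin n → ℝ => ∑ j, z j ^ ((i : ℕ) + 1)) y
      = (fun z : Fin n → ℝ => ∑ j, z j ^ ((i : ℕ) + 1)) x} := by
    rw [hV]
    ext y
    simp only [Set.mem_setOf_eq]
    constructor
    · intro hy i
      have hxv : ∀ i : Fin d, ∑ j, x j ^ ((i : ℕ) + 1) = a i := by rw [hV] at hx; exact hx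
      rw [hy i, hxv i]
    · intro hy i
      have hxv : ∀ i : Fin d, ∑ j, x j ^ ((i : ℕ) + 1) = a i := by rw [hV] at hx; exact hx
      rw [hy i, hxv i]
  have hextr : IsLocalExtrOn (fun y : Fin n → ℝ => ∑ j, y j ^ (d + 1))
      {y : Fin n → ℝ | ∀ i : Fin d, (fun z : Fin n → ℝ => ∑ j, z j ^ ((i : ℕ) + 1)) y
        = (fun z : Fin n → ℝ => ∑ j, z j ^ ((i : ℕ) + 1)) x} x := by
    rw [← hVx]
    rcases hext with h | h
    · exact Or.inl (h.filter_mono inf_le_right)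
    · exact Or.inr (h.filter_mono inf_le_right)
  obtain ⟨Λ, Λ₀, hΛne, heq⟩ := hextr.exists_multipliers_of_hasStrictFDerivAt
    (f' := fun i : Fin d => D (i : ℕ)) (fun i => hDeriv (i : ℕ)) (hDeriv d)
  -- evaluate the multiplier identity at basis vectors
  have hevalj : ∀ j : Fin n,
      (∑ i : Fin d, Λ i * (((i : ℝ) + 1) * x j ^ (i : ℕ)))
        + Λ₀ * (((d : ℝ) + 1) * x j ^ d) = 0 := by
    intro j
    have h := congrFun (congrArg (DFunLike.coe) heq) (Pi.single j 1)
    simp only [ContinuousLinearMap.add_apply, ContinuousLinearMap.coe_sum',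
      Finset.sum_apply, ContinuousLinearMap.smul_apply, smul_eq_mul,
      ContinuousLinearMap.zero_apply] at h
    simp only [hDapp] at h
    exact h
  -- build the polynomial
  set c : ℕ → ℝ := fun k =>
    if h : k < d then Λ ⟨k, h⟩ * ((k : ℝ) + 1)
    else if k = d then Λ₀ * ((d : ℝ) + 1) else 0 with hcdef
  set P : Polynomial ℝ := ∑ k ∈ Finset.range (d + 1), Polynomial.monomial k (c k) with hPdef
  have hcoeff : ∀ m : ℕ, m ≤ d → P.coeff m = c m := by
    intro m hm
    rw [hPdef, Polynomial.finset_sum_coeff]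
    rw [Finset.sum_eq_single m]
    · simp [Polynomial.coeff_monomial]
    · intro k _ hk
      simp [Polynomial.coeff_monomial, hk]
    · intro hmem
      exact absurd (Finset.mem_range.2 (Nat.lt_succ_of_le hm)) hmem
  have hPne : P ≠ 0 := by
    intro hP0
    apply hΛne
    have hc : ∀ m ≤ d, c m = 0 := by
      intro m hm
      rw [← hcoeff m hm, hP0, Polynomial.coeff_zero]
    have hΛ : Λ = 0 := by
      funext i
      have := hc (i : ℕ) (le_of_lt i.isLt)
      rw [hcdef] at this
      simp only [i.isLt, dif_pos] at this
      have h1 : ((i : ℝ) + 1) ≠ 0 := by positivity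
      have := mul_eq_zero.1 this
      rcases this with h | h
      · simpa using h
      · exact absurd h h1
    have hΛ₀ : Λ₀ = 0 := by
      have := hc d le_rfl
      rw [hcdef] at this
      simp only [lt_irrefl, dif_neg, if_pos rfl, not_lt] at this
      have h1 : ((d : ℝ) + 1) ≠ 0 := by positivity
      rcases mul_eq_zero.1 this with h | h
      · exact h
      · exact absurd h h1
    simp [hΛ, hΛ₀, Prod.ext_iff]
  have hdeg : P.natDegree ≤ d := by
    apply Polynomial.natDegree_sum_le_of_forall_le
    intro k hk
    exact le_trans (Polynomial.natDegree_monomial_le (c k))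
      (Nat.lt_succ_iff.1 (Finset.mem_range.1 hk))
  have hroot : ∀ j : Fin n, P.IsRoot (x j) := by
    intro j
    have heval : P.eval (x j) = ∑ k ∈ Finset.range (d + 1), c k * x j ^ k := by
      rw [hPdef, Polynomial.eval_finset_sum]
      simp [Polynomial.eval_monomial]
    rw [Polynomial.IsRoot, heval, Finset.sum_range_succ]
    have h1 : ∑ k ∈ Finset.range d, c k * x j ^ k
        = ∑ i : Fin d, Λ i * (((i : ℝ) + 1) * x j ^ (i : ℕ)) := by
      rw [Finset.sum_range]
      apply Finset.sum_congr rfl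
      intro i _
      rw [hcdef]
      simp only [i.isLt, dif_pos]
      ring
    have h2 : c d = Λ₀ * ((d : ℝ) + 1) := by
      rw [hcdef]; simp
    rw [h1, h2]
    have := hevalj j
    linarith [this]
  -- distinct coordinates are roots of a nonzero polynomial of degree ≤ d
  have hsub : Finset.univ.image x ⊆ P.roots.toFinset := by
    intro t ht
    obtain ⟨j, _, rfl⟩ := Finset.mem_image.1 ht
    rw [Multiset.mem_toFinset, Polynomial.mem_roots hPne]
    exact hroot j
  calc (Finset.univ.image x).card ≤ P.roots.toFinset.card := Finset.card_le_card hsub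
    _ ≤ Multiset.card P.roots := P.roots.toFinset_card_le
    _ ≤ P.natDegree := P.card_roots'
    _ ≤ d := hdeg
end

section
/- Suppose the Vandermonde variety V(a) ∩ W_c is nonempty and connected for a ∈ ℝ^d, and let S ⊆ ℝ^n be defined by symmetric polynomials of degree at most d ≤ n. If x, y ∈ S ∩ W_c satisfy p_i(x) = p_i(y) = a_i for i = 1, ..., d, then x and y lie in the same connected component of S ∩ W_c. -/
open MvPolynomial AddMonoidAlgebra Finset

private lemma eval_psum {n : ℕ} (z : Fin n → ℝ) (m : ℕ) :
    eval z (psum (Fin n) ℝ m) = ∑ j, z j ^ m := by simp [psum]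

private lemma eval_esymm_eq {n d : ℕ} (z x : Fin n → ℝ)
    (h : ∀ m, 1 ≤ m → m ≤ d → ∑ j, z j ^ m = ∑ j, x j ^ m) :
    ∀ k, k ≤ d → eval z (esymm (Fin n) ℝ k) = eval x (esymm (Fin n) ℝ k) := by
  intro k
  induction k using Nat.strong_induction_on with
  | _ k ih =>
    intro hkd
    rcases Nat.eq_zero_or_pos k with rfl | hk
    · simp [esymm_zero]
    have h1 := congrArg (eval z) (mul_esymm_eq_sum (Fin n) ℝ k)
    have h2 := congrArg (eval x) (mul_esymm_eq_sum (Fin n) ℝ k)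
    simp only [map_mul, map_sum, map_pow, map_natCast, map_neg, map_one] at h1 h2
    have hsum : ∑ a ∈ antidiagonal k with a.1 < k,
        (-1 : ℝ) ^ a.1 * eval z (esymm (Fin n) ℝ a.1) * eval z (psum (Fin n) ℝ a.2)
        = ∑ a ∈ antidiagonal k with a.1 < k,
        (-1 : ℝ) ^ a.1 * eval x (esymm (Fin n) ℝ a.1) * eval x (psum (Fin n) ℝ a.2) := by
      refine Finset.sum_congr rfl fun a ha => ?_
      rw [Finset.mem_filter, Finset.HasAntidiagonal.mem_antidiagonal] at ha
      have h2' : 1 ≤ a.2 := by omega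
      have h2d : a.2 ≤ d := by omega
      rw [ih a.1 ha.2 (by omega), eval_psum, eval_psum, h a.2 h2' h2d]
    have hk0 : (k : ℝ) ≠ 0 := Nat.cast_ne_zero.2 (by omega)
    exact mul_left_cancel₀ hk0 (by rw [h1, hsum, ← h2])

private lemma sum_accumulate {n : ℕ} (t : Fin n → ℕ) :
    ∑ j : Fin n, Fin.accumulate n n t j = ∑ i : Fin n, ((i : ℕ) + 1) * t i := by
  simp only [Fin.accumulate_apply, Finset.sum_filter]
  rw [Finset.sum_comm]
  refine Finset.sum_congr rfl fun i _ => ?_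
  rw [← Finset.sum_filter, Finset.sum_const, smul_eq_mul]
  congr 1
  have : (Finset.univ.filter fun j : Fin n => (j : ℕ) ≤ (i : ℕ)) = Finset.Iic i := by
    ext j; simp only [Finset.mem_filter, Finset.mem_univ, true_and, Finset.mem_Iic, Fin.le_def]
  rw [this, Fin.card_Iic]

private lemma totalDegree_esymm_le {n k : ℕ} : (esymm (Fin n) ℝ k).totalDegree ≤ k := by
  refine (totalDegree_finset_sum _ _).trans ?_
  refine Finset.sup_le fun s hs => ?_
  refine (totalDegree_finset_prod _ _).trans ?_
  rw [Finset.mem_powersetCard] at hs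
  calc ∑ i ∈ s, (X i : MvPolynomial (Fin n) ℝ).totalDegree
      ≤ ∑ _i ∈ s, 1 := Finset.sum_le_sum fun i _ => (totalDegree_X i).le
    _ = k := by rw [Finset.sum_const, smul_eq_mul, mul_one, hs.2]

private lemma totalDegree_eAHM {n : ℕ} (t : Fin n →₀ ℕ) (r : ℝ) :
    (esymmAlgHomMonomial (Fin n) t r).totalDegree ≤ ∑ i : Fin n, ((i : ℕ) + 1) * t i := by
  rw [esymmAlgHomMonomial, esymmAlgHom_apply, aeval_monomial]
  refine (totalDegree_mul _ _).trans ?_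
  rw [algebraMap_eq, totalDegree_C, zero_add]
  rw [Finsupp.prod]
  refine (totalDegree_finset_prod _ _).trans ?_
  refine le_trans (Finset.sum_le_sum fun i _ => ?_) (Finset.sum_le_sum_of_subset (Finset.subset_univ t.support))
  calc (esymm (Fin n) ℝ ((i : ℕ) + 1) ^ t i).totalDegree
      ≤ t i * (esymm (Fin n) ℝ ((i : ℕ) + 1)).totalDegree := totalDegree_pow _ _
    _ ≤ t i * ((i : ℕ) + 1) := Nat.mul_le_mul_left _ totalDegree_esymm_le
    _ = ((i : ℕ) + 1) * t i := mul_comm _ _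

private lemma eAHM_mem_adjoin {n d : ℕ} (t : Fin n →₀ ℕ) (r : ℝ)
    (ht : ∀ i : Fin n, t i ≠ 0 → (i : ℕ) + 1 ≤ d) :
    esymmAlgHomMonomial (Fin n) t r ∈
      Algebra.adjoin ℝ ((fun k => esymm (Fin n) ℝ k) '' Set.Icc 1 d) := by
  rw [esymmAlgHomMonomial, esymmAlgHom_apply, aeval_monomial]
  refine mul_mem ?_ ?_
  · rw [algebraMap_eq, ← MvPolynomial.algebraMap_eq]
    exact Subalgebra.algebraMap_mem _ r
  · rw [Finsupp.prod]
    refine prod_mem fun i hi => pow_mem ?_ _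
    refine Algebra.subset_adjoin ⟨(i : ℕ) + 1, ?_, rfl⟩
    exact ⟨Nat.le_add_left 1 _, ht i (Finsupp.mem_support_iff.mp hi)⟩

private lemma symm_mem_adjoin {n d : ℕ} (p : MvPolynomial (Fin n) ℝ) (hp : p.IsSymmetric)
    (hdeg : p.totalDegree ≤ d) :
    p ∈ Algebra.adjoin ℝ ((fun k => esymm (Fin n) ℝ k) '' Set.Icc 1 d) := by
  obtain rfl | h0 := eq_or_ne p 0
  · exact Subalgebra.zero_mem _
  induction' he : p.supDegree toLex using WellFoundedLT.induction with μ ih generalizing p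
  subst he
  have hlc : p.leadingCoeff toLex ≠ 0 := by
    rwa [Ne, leadingCoeff_eq_zero toLex.injective]
  have hν : Antitone ↑(ofLex <| p.supDegree toLex) := hp.antitone_supDegree
  have hsupp : (ofLex (p.supDegree toLex)) ∈ p.support := by
    rw [mem_support_iff, ← leadingCoeff_toLex]; exact hlc
  have hμsum : ∑ j : Fin n, (ofLex (p.supDegree toLex)) j ≤ d := by
    have h1 := le_totalDegree hsupp
    have h2 : (ofLex (p.supDegree toLex)).sum (fun _ e => e)
        = ∑ j : Fin n, (ofLex (p.supDegree toLex)) j := by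
      rw [Finsupp.sum_fintype]; intro _; rfl
    omega
  set ν := ofLex (p.supDegree toLex) with hνdef
  let t : Fin n →₀ ℕ := Finsupp.equivFunOnFinite.symm (Fin.invAccumulate n n ↑ν)
  have hacc : Fin.accumulate n n ↑t = ↑ν := Fin.accumulate_invAccumulate le_rfl hν
  have htle : ∀ i : Fin n, t i ≤ ν i := by
    intro i
    show Fin.invAccumulate n n (↑ν) i ≤ _
    rw [Fin.invAccumulate]
    simp only [i.isLt, dif_pos]
    exact Nat.sub_le _ _
  have htd : ∀ i : Fin n, t i ≠ 0 → (i : ℕ) + 1 ≤ d := by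
    intro i hi
    have hνi : 1 ≤ ν i := by have := htle i; omega
    have : ∑ j ∈ Finset.Iic i, (1:ℕ) ≤ ∑ j ∈ Finset.Iic i, ν j :=
      Finset.sum_le_sum fun j hj => le_trans hνi (hν (Finset.mem_Iic.mp hj))
    have h2 : ∑ j ∈ Finset.Iic i, ν j ≤ ∑ j : Fin n, ν j :=
      Finset.sum_le_sum_of_subset (Finset.subset_univ _)
    rw [Finset.sum_const, smul_eq_mul, mul_one, Fin.card_Iic] at this
    omega
  set q := esymmAlgHomMonomial (Fin n) t (p.leadingCoeff toLex) with hqdef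
  have hq_mem : q ∈ Algebra.adjoin ℝ ((fun k => esymm (Fin n) ℝ k) '' Set.Icc 1 d) :=
    eAHM_mem_adjoin t _ htd
  have hq_deg : q.totalDegree ≤ d := by
    refine (totalDegree_eAHM t _).trans ?_
    rw [← sum_accumulate, hacc]; exact hμsum
  have hd' : q.supDegree toLex = p.supDegree toLex := by
    rw [← ofLex_inj, DFunLike.ext'_iff, supDegree_esymmAlgHomMonomial hlc t le_rfl]
    exact hacc
  have hlcq : q.leadingCoeff toLex = p.leadingCoeff toLex :=
    leadingCoeff_esymmAlgHomMonomial t le_rfl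
  by_cases hne : p = q
  · rw [hne]; exact hq_mem
  have hlt := (supDegree_sub_lt_of_leadingCoeff_eq toLex.injective hd'.symm hlcq.symm).resolve_right hne
  have hrec := ih _ hlt (p - q) (hp.sub (isSymmetric_esymmAlgHomMonomial _ _))
    ((totalDegree_sub p q).trans (max_le hdeg hq_deg)) (sub_ne_zero.mpr hne) rfl
  have : p = (p - q) + q := by ring
  rw [this]
  exact Subalgebra.add_mem _ hrec hq_mem

private lemma eval_eq_of_psum_eq {n d : ℕ} (z x : Fin n → ℝ)
    (h : ∀ m, 1 ≤ m → m ≤ d → ∑ j, z j ^ m = ∑ j, x j ^ m)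
    (p : MvPolynomial (Fin n) ℝ) (hp : p.IsSymmetric) (hdeg : p.totalDegree ≤ d) :
    eval z p = eval x p := by
  have hmem := symm_mem_adjoin p hp hdeg
  clear hp hdeg
  induction hmem using Algebra.adjoin_induction with
  | mem q hq =>
    obtain ⟨k, ⟨hk1, hkd⟩, rfl⟩ := hq
    exact eval_esymm_eq z x h k hkd
  | algebraMap r => simp [MvPolynomial.algebraMap_eq]
  | add q1 q2 h1 h2 ih1 ih2 => simp [ih1, ih2]
  | mul q1 q2 h1 h2 ih1 ih2 => simp [ih1, ih2]

theorem stmt19 (n d s : ℕ) (hd : d ≤ n) (f : Fin s → MvPolynomial (Fin n) ℝ)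
    (hsym : ∀ i, (f i).IsSymmetric) (hdeg : ∀ i, (f i).totalDegree ≤ d)
    (S : Set (Fin n → ℝ)) (hS : S = {x | ∀ i, 0 ≤ eval x (f i)})
    (Wc : Set (Fin n → ℝ)) (hW : Wc = {x | Monotone x})
    (a : Fin d → ℝ)
    (hconn : IsConnected ({z | ∀ i : Fin d, ∑ j, z j ^ ((i : ℕ) + 1) = a i} ∩ Wc))
    (x y : Fin n → ℝ) (hx : x ∈ S ∩ Wc) (hy : y ∈ S ∩ Wc)
    (hax : ∀ i : Fin d, ∑ j, x j ^ ((i : ℕ) + 1) = a i)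
    (hay : ∀ i : Fin d, ∑ j, y j ^ ((i : ℕ) + 1) = a i) :
    y ∈ connectedComponentIn (S ∩ Wc) x := by
  set T : Set (Fin n → ℝ) := {z | ∀ i : Fin d, ∑ j, z j ^ ((i : ℕ) + 1) = a i} ∩ Wc with hT
  have hxT : x ∈ T := ⟨hax, hx.2⟩
  have hyT : y ∈ T := ⟨hay, hy.2⟩
  have hTsub : T ⊆ S ∩ Wc := by
    rintro z ⟨hz1, hz2⟩
    refine ⟨?_, hz2⟩
    have hpsum : ∀ m, 1 ≤ m → m ≤ d → ∑ j, z j ^ m = ∑ j, x j ^ m := by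
      intro m h1 h2
      have hm : m - 1 < d := by omega
      have := (hz1 ⟨m - 1, hm⟩).trans (hax ⟨m - 1, hm⟩).symm
      simpa [Nat.sub_add_cancel h1] using this
    rw [hS]
    intro i
    rw [show eval z (f i) = eval x (f i) from
      eval_eq_of_psum_eq z x hpsum (f i) (hsym i) (hdeg i)]
    exact hS ▸ hx.1 <| i
  exact hconn.isPreconnected.subset_connectedComponentIn hxT hTsub hyT
end
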